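/- For θ− ∈ (0, π/2) and for each pair (β0, β1) ∈ {0,1}², the 2×2 Hermitian matrix C_{β0β1}(θ−) = δ_{β0β1}·(−1)^{β0}·(Z + cos(θ−)·I) + (1 − δ_{β0β1})·(−1)^{β1}·sin(θ−)·X is bounded above in the Loewner order by I + cos(θ−)·Z. -/

import Mathlib

open Matrix ComplexOrder

lemma aux_psd (p q : ℝ) :
    (!![((p:ℂ))*p, p*q; p*q, q*q] : Matrix (Fin 2) (Fin 2) ℂ).PosSemidef := by
  have h := Matrix.posSemidef_conjTranspose_mul_self (!![(p:ℂ), q; 0, 0])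
  have e : (!![(p:ℂ), q; 0, 0])ᴴ * (!![(p:ℂ), q; 0, 0]) =
      !![((p:ℂ))*p, p*q; p*q, q*q] := by
    ext i j
    fin_cases i <;> fin_cases j <;>
      simp [Matrix.mul_apply, Matrix.conjTranspose_apply, Fin.sum_univ_two,
        Complex.conj_ofReal] <;> ring
  rwa [e] at h

lemma aux_psd2 (p q : ℝ) :
    (!![2*(((p:ℂ))*p), 2*(p*q); 2*(p*q), 2*(q*q)] :
      Matrix (Fin 2) (Fin 2) ℂ).PosSemidef := by
  have h := Matrix.posSemidef_conjTranspose_mul_self (!![(p:ℂ), q; p, q])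
  have e : (!![(p:ℂ), q; p, q])ᴴ * (!![(p:ℂ), q; p, q]) =
      !![2*(((p:ℂ))*p), 2*(p*q); 2*(p*q), 2*(q*q)] := by
    ext i j
    fin_cases i <;> fin_cases j <;>
      simp [Matrix.mul_apply, Matrix.conjTranspose_apply, Fin.sum_univ_two,
        Complex.conj_ofReal] <;> ring
  rwa [e] at h

/-- For `θ− ∈ (0, π/2)`, each matrix
`C_{β0β1}(θ−) = δ_{β0β1}(−1)^{β0}(Z + cosθ−·I) + (1−δ_{β0β1})(−1)^{β1} sinθ−·X`
is bounded above by `I + cosθ−·Z` in the Loewner order. -/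
theorem stmt11 (θ : ℝ) (hθ : θ ∈ Set.Ioo 0 (Real.pi / 2)) (β0 β1 : Fin 2) :
    (((1 : Matrix (Fin 2) (Fin 2) ℂ) +
        (Real.cos θ : ℂ) • (!![1, 0; 0, -1] : Matrix (Fin 2) (Fin 2) ℂ)) -
      ((if β0 = β1 then ((-1 : ℂ) ^ (β0 : ℕ)) else 0) •
          ((!![1, 0; 0, -1] : Matrix (Fin 2) (Fin 2) ℂ) +
            (Real.cos θ : ℂ) • (1 : Matrix (Fin 2) (Fin 2) ℂ)) +
        (if β0 = β1 then 0 else ((-1 : ℂ) ^ (β1 : ℕ)) * (Real.sin θ : ℂ)) •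
          (!![0, 1; 1, 0] : Matrix (Fin 2) (Fin 2) ℂ))).PosSemidef := by
  have hcos : Real.cos θ = 2 * Real.cos (θ/2) ^ 2 - 1 := by
    have h := Real.cos_two_mul (θ/2)
    rw [show 2*(θ/2) = θ by ring] at h
    exact h
  have hsin : Real.sin θ = 2 * Real.sin (θ/2) * Real.cos (θ/2) := by
    have h := Real.sin_two_mul (θ/2)
    rw [show 2*(θ/2) = θ by ring] at h
    exact h
  have hpy : Real.sin (θ/2) ^ 2 + Real.cos (θ/2) ^ 2 = 1 := Real.sin_sq_add_cos_sq _
  set c := Real.cos (θ/2) with hc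
  set s := Real.sin (θ/2) with hs
  have hpyC : (s:ℂ) ^ 2 + (c:ℂ) ^ 2 = 1 := by exact_mod_cast hpy
  fin_cases β0 <;> fin_cases β1
  · convert aux_psd 0 (2*s) using 1
    ext i j
    fin_cases i <;> fin_cases j <;> simp [Matrix.one_apply, hcos] <;>
      norm_cast <;> push_cast <;> grind
  · convert aux_psd2 c s using 1
    ext i j
    fin_cases i <;> fin_cases j <;> simp [Matrix.one_apply, hcos, hsin] <;>
      norm_cast <;> push_cast <;> grind
  · convert aux_psd2 c (-s) using 1
    ext i j
    fin_cases i <;> fin_cases j <;> simp [Matrix.one_apply, hcos, hsin] <;>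
      norm_cast <;> push_cast <;> grind
  · convert aux_psd (2*c) 0 using 1
    ext i j
    fin_cases i <;> fin_cases j <;> simp [Matrix.one_apply, hcos] <;>
      norm_cast <;> push_cast <;> grind
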